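/- arXiv:1711.05844 — 4 statements merged into one kernel-verified Lean document; each statement's English description precedes it below -/
import Mathlib

section
/- If a finite simple graph Γ is bi-dismantlable and a vertex v is bi-dominated in Γ by some vertex u, then the induced subgraph Γ \ {v} is bi-dismantlable. -/
/-- `v` is bi-dominated by `u` within the induced subgraph on `s`:
every neighbour of `v` in `s` is a neighbour of `u`. -/
def BiDominatedIn {V : Type*} (G : SimpleGraph V) (s : Finset V) (v u : V) : Prop :=
  v ∈ s ∧ u ∈ s ∧ v ≠ u ∧ ∀ x ∈ s, G.Adj v x → G.Adj u x

/-- The induced subgraph on `s` is a complete bipartite graph (biclique). -/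
def IsBiclique {V : Type*} [DecidableEq V] (G : SimpleGraph V) (s : Finset V) : Prop :=
  ∃ A B : Finset V, A.Nonempty ∧ B.Nonempty ∧ Disjoint A B ∧ A ∪ B = s ∧
    ∀ a ∈ s, ∀ b ∈ s, (G.Adj a b ↔ ((a ∈ A ∧ b ∈ B) ∨ (a ∈ B ∧ b ∈ A)))

/-- `s` (as an induced subgraph of `G`) is bi-dismantlable: a biclique can be obtained
by successively deleting bi-dominated vertices. -/
inductive BiDismantlable {V : Type*} [DecidableEq V] (G : SimpleGraph V) : Finset V → Prop
  | biclique (s : Finset V) : IsBiclique G s → BiDismantlable G s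
  | step (s : Finset V) (v u : V) : BiDominatedIn G s v u →
      BiDismantlable G (s.erase v) → BiDismantlable G s

/-- Restricting a domination relation to a subset. -/
lemma BiDominatedIn.subset {V : Type*} {G : SimpleGraph V} {s t : Finset V} {v u : V}
    (h : BiDominatedIn G s v u) (hts : t ⊆ s) (hv : v ∈ t) (hu : u ∈ t) :
    BiDominatedIn G t v u :=
  ⟨hv, hu, h.2.2.1, fun x hx => h.2.2.2 x (hts hx)⟩

lemma mem_image_equiv_iff {V : Type*} [DecidableEq V] {σ : V ≃ V} {A : Finset V} {a : V} :
    σ a ∈ A.image σ ↔ a ∈ A := by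
  simp [Finset.mem_image]

/-- Transport a biclique along an equivalence preserving adjacency on `s`. -/
lemma IsBiclique.image {V : Type*} [DecidableEq V] {G : SimpleGraph V} {σ : V ≃ V}
    {s t : Finset V} (hσ : ∀ a ∈ s, ∀ b ∈ s, G.Adj (σ a) (σ b) ↔ G.Adj a b)
    (hts : t ⊆ s) (hb : IsBiclique G t) : IsBiclique G (t.image σ) := by
  obtain ⟨A, B, hA, hB, hAB, hU, hadj⟩ := hb
  refine ⟨A.image σ, B.image σ, hA.image σ, hB.image σ, ?_, ?_, ?_⟩
  · exact (Finset.disjoint_image σ.injective).2 hAB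
  · rw [← Finset.image_union, hU]
  · intro a' ha' b' hb'
    obtain ⟨a, ha, rfl⟩ := Finset.mem_image.1 ha'
    obtain ⟨b, hb, rfl⟩ := Finset.mem_image.1 hb'
    rw [hσ a (hts ha) b (hts hb), hadj a ha b hb, mem_image_equiv_iff,
      mem_image_equiv_iff, mem_image_equiv_iff, mem_image_equiv_iff]

/-- Transport dismantlability along an equivalence preserving adjacency on `s`. -/
lemma BiDismantlable.image {V : Type*} [DecidableEq V] {G : SimpleGraph V} {σ : V ≃ V}
    {s : Finset V} (hσ : ∀ a ∈ s, ∀ b ∈ s, G.Adj (σ a) (σ b) ↔ G.Adj a b)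
    (t : Finset V) (hd : BiDismantlable G t) : t ⊆ s → BiDismantlable G (t.image σ) := by
  induction hd with
  | biclique t hb => exact fun hts => .biclique _ (hb.image hσ hts)
  | step t a b hdom hd ih =>
    intro hts
    refine .step _ (σ a) (σ b) ?_ ?_
    · refine ⟨Finset.mem_image_of_mem σ hdom.1, Finset.mem_image_of_mem σ hdom.2.1,
        fun h => hdom.2.2.1 (σ.injective h), ?_⟩
      intro x hx hax
      obtain ⟨y, hy, rfl⟩ := Finset.mem_image.1 hx
      rw [hσ a (hts hdom.1) y (hts hy)] at hax
      rw [hσ b (hts hdom.2.1) y (hts hy)]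
      exact hdom.2.2.2 y hy hax
    · rw [← Finset.image_erase σ.injective]
      exact ih (fun x hx => hts (Finset.erase_subset a t hx))

/-- One-sided version: erasing a vertex of `A` that is bi-dominated from a biclique. -/
lemma biclique_erase_half {V : Type*} [DecidableEq V] {G : SimpleGraph V}
    {s A B : Finset V} {v u : V}
    (hB : B.Nonempty) (hAB : Disjoint A B) (hU : A ∪ B = s)
    (hadj : ∀ a ∈ s, ∀ b ∈ s, (G.Adj a b ↔ ((a ∈ A ∧ b ∈ B) ∨ (a ∈ B ∧ b ∈ A))))
    (hvA : v ∈ A) (hus : u ∈ s) (hvu : v ≠ u)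
    (hdm : ∀ x ∈ s, G.Adj v x → G.Adj u x) :
    IsBiclique G (s.erase v) := by
  have hvs : v ∈ s := hU ▸ Finset.mem_union_left B hvA
  have hvB : v ∉ B := Finset.disjoint_left.1 hAB hvA
  have huA : u ∈ A := by
    have huAB : u ∈ A ∪ B := by rw [hU]; exact hus
    rcases Finset.mem_union.1 huAB with h | h
    · exact h
    · have hadjvu : G.Adj v u := (hadj v hvs u hus).2 (Or.inl ⟨hvA, h⟩)
      exact absurd (hdm u hus hadjvu) (G.irrefl)
  refine ⟨A.erase v, B, ⟨u, Finset.mem_erase.2 ⟨hvu.symm, huA⟩⟩, hB,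
    Finset.disjoint_of_subset_left (Finset.erase_subset v A) hAB, ?_, ?_⟩
  · rw [← hU, Finset.erase_union_distrib, Finset.erase_eq_of_notMem hvB]
  · intro a ha b hb
    obtain ⟨hav, has⟩ := Finset.mem_erase.1 ha
    obtain ⟨hbv, hbs⟩ := Finset.mem_erase.1 hb
    rw [hadj a has b hbs]
    simp only [Finset.mem_erase, hav, hbv, ne_eq, not_false_eq_true, true_and]

/-- Erasing a bi-dominated vertex from a biclique yields a biclique. -/
lemma IsBiclique.erase {V : Type*} [DecidableEq V] {G : SimpleGraph V}
    {s : Finset V} {v u : V} (hb : IsBiclique G s) (hdom : BiDominatedIn G s v u) :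
    IsBiclique G (s.erase v) := by
  obtain ⟨A, B, hA, hB, hAB, hU, hadj⟩ := hb
  obtain ⟨hvs, hus, hvu, hdm⟩ := hdom
  have hvAB : v ∈ A ∪ B := by rw [hU]; exact hvs
  rcases Finset.mem_union.1 hvAB with hvA | hvB
  · exact biclique_erase_half hB hAB hU hadj hvA hus hvu hdm
  · exact biclique_erase_half hA hAB.symm (Finset.union_comm A B ▸ hU)
      (fun a ha b hb => (hadj a ha b hb).trans or_comm) hvB hus hvu hdm

/-- Main auxiliary lemma: erasing a bi-dominated vertex preserves dismantlability. -/
lemma BiDismantlable.erase_of_biDominated {V : Type*} [DecidableEq V] {G : SimpleGraph V}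
    {s : Finset V} (hd : BiDismantlable G s) :
    ∀ v u : V, BiDominatedIn G s v u → BiDismantlable G (s.erase v) := by
  induction hd with
  | biclique s hb => exact fun v u hdom => .biclique _ (hb.erase hdom)
  | step s w x hwx hd ih =>
    intro v u hdom
    obtain ⟨hvs, hus, hvu, hdm⟩ := hdom
    obtain ⟨hws, hxs, hwx', hdmw⟩ := hwx
    by_cases hvw : v = w
    · subst hvw; exact hd
    · by_cases huw : u = w
      · rw [huw] at hvu hus hdm
        clear huw
        -- v is dominated by w; w is dominated by x
        by_cases hxv : x = v
        · -- mutual domination: swap v and w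
          rw [hxv] at hdmw hwx' hxs
          clear hxv
          have key : ∀ y ∈ s, G.Adj v y ↔ G.Adj w y :=
            fun y hy => ⟨hdm y hy, hdmw y hy⟩
          set σ := Equiv.swap v w with hσdef
          have hmap : ∀ a ∈ s, σ a ∈ s := by
            intro a ha
            rcases eq_or_ne a v with rfl | hav
            · rwa [hσdef, Equiv.swap_apply_left]
            rcases eq_or_ne a w with rfl | haw
            · rwa [hσdef, Equiv.swap_apply_right]
            · rwa [hσdef, Equiv.swap_apply_of_ne_of_ne hav haw]
          have hone : ∀ a ∈ s, ∀ b ∈ s, G.Adj (σ a) b ↔ G.Adj a b := by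
            intro a ha b hb
            rcases eq_or_ne a v with rfl | hav
            · rw [hσdef, Equiv.swap_apply_left]; exact (key b hb).symm
            rcases eq_or_ne a w with rfl | haw
            · rw [hσdef, Equiv.swap_apply_right]; exact key b hb
            · rw [hσdef, Equiv.swap_apply_of_ne_of_ne hav haw]
          have hσadj : ∀ a ∈ s, ∀ b ∈ s, G.Adj (σ a) (σ b) ↔ G.Adj a b := by
            intro a ha b hb
            rw [hone a ha (σ b) (hmap b hb), G.adj_comm, hone b hb a ha, G.adj_comm]
          have himg : (s.erase w).image σ = s.erase v := by
            ext y
            simp only [Finset.mem_image, Finset.mem_erase]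
            constructor
            · rintro ⟨z, ⟨hzw, hzs⟩, rfl⟩
              rcases eq_or_ne z v with rfl | hzv
              · rw [hσdef, Equiv.swap_apply_left]
                exact ⟨Ne.symm hvw, hws⟩
              · rw [hσdef, Equiv.swap_apply_of_ne_of_ne hzv hzw]
                exact ⟨hzv, hzs⟩
            · rintro ⟨hyv, hys⟩
              rcases eq_or_ne y w with rfl | hyw
              · exact ⟨v, ⟨hvw, hvs⟩, by rw [hσdef, Equiv.swap_apply_left]⟩
              · exact ⟨y, ⟨hyw, hys⟩, by rw [hσdef, Equiv.swap_apply_of_ne_of_ne hyv hyw]⟩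
          exact himg ▸ BiDismantlable.image hσadj (s.erase w) hd (Finset.erase_subset w s)
        · -- v dominated by x in s.erase w; then remove w (dominated by x) from s.erase v
          have hxw : x ≠ w := Ne.symm hwx'
          have hdv : BiDominatedIn G (s.erase w) v x :=
            ⟨Finset.mem_erase.2 ⟨hvw, hvs⟩, Finset.mem_erase.2 ⟨hxw, hxs⟩,
             Ne.symm hxv, fun y hy hvy =>
               hdmw y (Finset.mem_of_mem_erase hy) (hdm y (Finset.mem_of_mem_erase hy) hvy)⟩
          have h1 := ih v x hdv
          refine .step _ w x ⟨Finset.mem_erase.2 ⟨Ne.symm hvw, hws⟩,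
            Finset.mem_erase.2 ⟨hxv, hxs⟩, hwx', fun y hy => hdmw y (Finset.mem_of_mem_erase hy)⟩ ?_
          rwa [Finset.erase_right_comm]
      · -- u ≠ w: v still dominated by u in s.erase w
        have hdv : BiDominatedIn G (s.erase w) v u :=
          ⟨Finset.mem_erase.2 ⟨hvw, hvs⟩, Finset.mem_erase.2 ⟨huw, hus⟩, hvu,
           fun y hy => hdm y (Finset.mem_of_mem_erase hy)⟩
        have h1 := ih v u hdv
        by_cases hxv : x = v
        · -- x = v: w is dominated by u in s (via v)
          rw [hxv] at hdmw hwx' hxs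
          clear hxv
          refine .step _ w u ⟨Finset.mem_erase.2 ⟨Ne.symm hvw, hws⟩,
            Finset.mem_erase.2 ⟨Ne.symm hvu, hus⟩, Ne.symm huw, fun y hy hwy => ?_⟩ ?_
          · exact hdm y (Finset.mem_of_mem_erase hy) (hdmw y (Finset.mem_of_mem_erase hy) hwy)
          · rwa [Finset.erase_right_comm]
        · refine .step _ w x ⟨Finset.mem_erase.2 ⟨Ne.symm hvw, hws⟩,
            Finset.mem_erase.2 ⟨hxv, hxs⟩, hwx',
            fun y hy => hdmw y (Finset.mem_of_mem_erase hy)⟩ ?_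
          rwa [Finset.erase_right_comm]

/-- If a finite graph Γ is bi-dismantlable and `v` is bi-dominated in Γ by `u`,
then Γ \ v is bi-dismantlable. -/
theorem biDismantlable_erase {V : Type*} [Fintype V] [DecidableEq V]
    (G : SimpleGraph V) (v u : V)
    (hdom : BiDominatedIn G Finset.univ v u)
    (hd : BiDismantlable G Finset.univ) :
    BiDismantlable G (Finset.univ.erase v) := hd.erase_of_biDominated v u hdom
end

section
/- If Γ is a finite bi-dismantlable simple graph with more than one vertex, then the automorphism group of Γ stabilizes (setwise) the vertex set of a complete bipartite subgraph of Γ. -/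
section Aux

variable {V : Type*} [DecidableEq V] {G : SimpleGraph V}

lemma bidom_not_adj {s : Finset V} {v u : V} (h : BiDominatedIn G s v u) : ¬ G.Adj v u :=
  fun ha => G.irrefl (h.2.2.2 u h.2.1 ha)

/-- Removing a bi-dominated vertex from a biclique, where the vertex and its
dominator are on the given side `A`. -/
lemma erase_side {s : Finset V} {v u : V} {A B : Finset V}
    (hA : A.Nonempty) (hB : B.Nonempty) (hdisj : Disjoint A B) (hun : A ∪ B = s)
    (hiff : ∀ a ∈ s, ∀ b ∈ s, (G.Adj a b ↔ ((a ∈ A ∧ b ∈ B) ∨ (a ∈ B ∧ b ∈ A))))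
    (hvA : v ∈ A) (huA : u ∈ A) (hne : u ≠ v) : IsBiclique G (s.erase v) := by
  refine ⟨A.erase v, B, ⟨u, Finset.mem_erase.mpr ⟨hne, huA⟩⟩, hB,
    Finset.disjoint_of_subset_left (Finset.erase_subset _ _) hdisj, ?_, ?_⟩
  · ext y
    simp only [Finset.mem_union, Finset.mem_erase, ← hun]
    have : y ∈ B → y ≠ v := fun hy h => Finset.disjoint_left.mp hdisj hvA (h ▸ hy)
    tauto
  · intro a ha b hb
    have ha' := Finset.mem_of_mem_erase ha
    have hb' := Finset.mem_of_mem_erase hb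
    have hane : a ≠ v := (Finset.mem_erase.mp ha).1
    have hbne : b ≠ v := (Finset.mem_erase.mp hb).1
    rw [hiff a ha' b hb']
    simp only [Finset.mem_erase, hane, hbne, ne_eq, not_false_eq_true, true_and]

lemma IsBiclique.erase_dom {s : Finset V} {v u : V} (hb : IsBiclique G s)
    (hd : BiDominatedIn G s v u) : IsBiclique G (s.erase v) := by
  obtain ⟨A, B, hA, hB, hdisj, hun, hiff⟩ := hb
  have hvs := hd.1
  have hus := hd.2.1
  have hnadj := bidom_not_adj hd
  have hne : u ≠ v := hd.2.2.1.symm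
  rcases Finset.mem_union.mp (hun ▸ hvs : v ∈ A ∪ B) with hvA | hvB
  · have huA : u ∈ A := by
      rcases Finset.mem_union.mp (hun ▸ hus : u ∈ A ∪ B) with h | h
      · exact h
      · exact absurd ((hiff v hvs u hus).mpr (Or.inl ⟨hvA, h⟩)) hnadj
    exact erase_side hA hB hdisj hun hiff hvA huA hne
  · have huB : u ∈ B := by
      rcases Finset.mem_union.mp (hun ▸ hus : u ∈ A ∪ B) with h | h
      · exact absurd ((hiff v hvs u hus).mpr (Or.inr ⟨hvB, h⟩)) hnadj
      · exact h
    exact erase_side hB hA hdisj.symm (by rwa [Finset.union_comm]) (fun a ha b hb =>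
      (hiff a ha b hb).trans or_comm) hvB huB hne

/-- Transport of bicliques along an adjacency-preserving bijection. -/
lemma IsBiclique.map (e : V ≃ V) {s : Finset V}
    (hadj : ∀ a ∈ s, ∀ b ∈ s, (G.Adj a b ↔ G.Adj (e a) (e b)))
    (hb : IsBiclique G s) : IsBiclique G (s.image e) := by
  obtain ⟨A, B, hA, hB, hdisj, hun, hiff⟩ := hb
  refine ⟨A.image e, B.image e, hA.image e, hB.image e,
    (Finset.disjoint_image e.injective).mpr hdisj, ?_, ?_⟩
  · rw [← Finset.image_union, hun]
  · intro a ha b hb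
    obtain ⟨a', ha', rfl⟩ := Finset.mem_image.mp ha
    obtain ⟨b', hb', rfl⟩ := Finset.mem_image.mp hb
    have hmem : ∀ (C : Finset V) (x : V), e x ∈ C.image e ↔ x ∈ C := fun C x =>
      ⟨fun h => by
        obtain ⟨y, hy, hyx⟩ := Finset.mem_image.mp h
        exact e.injective hyx ▸ hy,
       fun h => Finset.mem_image_of_mem e h⟩
    rw [← hadj a' ha' b' hb', hmem A a', hmem B a', hmem A b', hmem B b']
    exact hiff a' ha' b' hb'

/-- Transport of bi-dismantlability along an adjacency-preserving bijection. -/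
lemma BiDismantlable.map (e : V ≃ V) {s : Finset V} (h : BiDismantlable G s) :
    (∀ a ∈ s, ∀ b ∈ s, (G.Adj a b ↔ G.Adj (e a) (e b))) → BiDismantlable G (s.image e) := by
  induction h with
  | biclique s hb => exact fun hadj => .biclique _ (hb.map e hadj)
  | step s v u hdom hd ih =>
    intro hadj
    refine .step _ (e v) (e u) ⟨Finset.mem_image_of_mem _ hdom.1,
      Finset.mem_image_of_mem _ hdom.2.1, fun h => hdom.2.2.1 (e.injective h), ?_⟩ ?_
    · intro x hx hax
      obtain ⟨x', hx', rfl⟩ := Finset.mem_image.mp hx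
      exact (hadj u hdom.2.1 x' hx').mp (hdom.2.2.2 x' hx' ((hadj v hdom.1 x' hx').mpr hax))
    · rw [← Finset.image_erase e.injective]
      exact ih (fun a ha b hb =>
        hadj a (Finset.mem_of_mem_erase ha) b (Finset.mem_of_mem_erase hb))

lemma swap_image {v w : V} {s : Finset V} (hv : v ∈ s) (hw : w ∈ s) :
    s.image (Equiv.swap v w) = s := by
  apply Finset.eq_of_subset_of_card_le
  · intro y hy
    obtain ⟨x, hx, rfl⟩ := Finset.mem_image.mp hy
    rw [Equiv.swap_apply_def]
    split_ifs <;> assumption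
  · rw [Finset.card_image_of_injective _ (Equiv.swap v w).injective]

/-- Greedy lemma: removing any bi-dominated vertex preserves bi-dismantlability. -/
lemma BiDismantlable.erase_dom {s : Finset V} (h : BiDismantlable G s) :
    ∀ v u, BiDominatedIn G s v u → BiDismantlable G (s.erase v) := by
  induction h with
  | biclique s hb => exact fun v u hdom => .biclique _ (hb.erase_dom hdom)
  | step s w x hwx hd ih =>
    intro v u hvu
    by_cases hvw : v = w
    · exact hvw ▸ hd
    by_cases hspecial : u = w ∧ x = v
    · -- twin swap case: v and w bi-dominate each other
      obtain ⟨huw, hxv⟩ := hspecial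
      have hP1 : ∀ y ∈ s, G.Adj v y → G.Adj w y := fun y hy h => huw ▸ hvu.2.2.2 y hy h
      have hP2 : ∀ y ∈ s, G.Adj w y → G.Adj v y := fun y hy h => hxv ▸ hwx.2.2.2 y hy h
      have himg : (s.erase w).image (Equiv.swap v w) = s.erase v := by
        rw [Finset.image_erase (Equiv.swap v w).injective, swap_image hvu.1 hwx.1,
          Equiv.swap_apply_right]
      have hres := hd.map (Equiv.swap v w) ?_
      · rwa [himg] at hres
      · intro a ha b hb
        have has := Finset.mem_of_mem_erase ha
        have hbs := Finset.mem_of_mem_erase hb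
        have haw : a ≠ w := (Finset.mem_erase.mp ha).1
        have hbw : b ≠ w := (Finset.mem_erase.mp hb).1
        rcases eq_or_ne v a with rfl | hav' <;> rcases eq_or_ne v b with rfl | hbv'
        · simp only [Equiv.swap_apply_left]
          constructor <;> (intro h; exact (G.irrefl h).elim)
        · rw [Equiv.swap_apply_left, Equiv.swap_apply_of_ne_of_ne hbv'.symm hbw]
          exact ⟨hP1 b hbs, hP2 b hbs⟩
        · rw [Equiv.swap_apply_left, Equiv.swap_apply_of_ne_of_ne hav'.symm haw]
          exact ⟨fun h => (hP1 a has h.symm).symm, fun h => (hP2 a has h.symm).symm⟩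
        · rw [Equiv.swap_apply_of_ne_of_ne hav'.symm haw, Equiv.swap_apply_of_ne_of_ne hbv'.symm hbw]
    · -- generic case
      obtain ⟨u₀, hu₀s, hu₀v, hu₀w, hpre₀⟩ :
          ∃ u₀, u₀ ∈ s ∧ u₀ ≠ v ∧ u₀ ≠ w ∧ ∀ y ∈ s, G.Adj v y → G.Adj u₀ y := by
        by_cases huw : u = w
        · have hxv : x ≠ v := fun h => hspecial ⟨huw, h⟩
          exact ⟨x, hwx.2.1, hxv, hwx.2.2.1.symm,
            fun y hy h => hwx.2.2.2 y hy (huw ▸ hvu.2.2.2 y hy h)⟩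
        · exact ⟨u, hvu.2.1, hvu.2.2.1.symm, huw, hvu.2.2.2⟩
      obtain ⟨x₀, hx₀s, hx₀w, hx₀v, hprew⟩ :
          ∃ x₀, x₀ ∈ s ∧ x₀ ≠ w ∧ x₀ ≠ v ∧ ∀ y ∈ s, G.Adj w y → G.Adj x₀ y := by
        by_cases hxv : x = v
        · exact ⟨u₀, hu₀s, hu₀w, hu₀v,
            fun y hy h => hpre₀ y hy (hxv ▸ hwx.2.2.2 y hy h)⟩
        · exact ⟨x, hwx.2.1, hwx.2.2.1.symm, hxv, hwx.2.2.2⟩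
      have h1 := ih v u₀ ⟨Finset.mem_erase.mpr ⟨hvw, hvu.1⟩,
        Finset.mem_erase.mpr ⟨hu₀w, hu₀s⟩, hu₀v.symm,
        fun y hy => hpre₀ y (Finset.mem_of_mem_erase hy)⟩
      refine .step _ w x₀ ⟨Finset.mem_erase.mpr ⟨Ne.symm hvw, hwx.1⟩,
        Finset.mem_erase.mpr ⟨hx₀v, hx₀s⟩, Ne.symm hx₀w,
        fun y hy => hprew y (Finset.mem_of_mem_erase hy)⟩ ?_
      rw [Finset.erase_right_comm]
      exact h1

/-- Extending a biclique on `s.erase w` by a twin `w` of `x ∈ A`. -/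
lemma extend_twin {s : Finset V} {w x : V} (hw : w ∈ s) (hxw : x ≠ w)
    (htwin : ∀ y ∈ s, (G.Adj w y ↔ G.Adj x y))
    {A B : Finset V} (hB : B.Nonempty) (hdisj : Disjoint A B)
    (hun : A ∪ B = s.erase w) (hxA : x ∈ A)
    (hiff : ∀ a ∈ s.erase w, ∀ b ∈ s.erase w,
      (G.Adj a b ↔ ((a ∈ A ∧ b ∈ B) ∨ (a ∈ B ∧ b ∈ A)))) :
    IsBiclique G s := by
  have hxB : x ∉ B := Finset.disjoint_left.mp hdisj hxA
  have hwB : w ∉ B := fun h =>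
    (Finset.notMem_erase w s) (hun ▸ Finset.mem_union_right A h)
  have hxs : x ∈ s.erase w := Finset.mem_erase.mpr ⟨hxw, Finset.mem_of_mem_erase (hun ▸ Finset.mem_union_left B hxA)⟩
  have key : ∀ y ∈ s, (G.Adj w y ↔ y ∈ B) := by
    intro y hy
    rcases eq_or_ne y w with heq | hyw
    · rw [heq]
      exact ⟨fun h => (G.irrefl h).elim, fun h => absurd h hwB⟩
    · have hy' : y ∈ s.erase w := Finset.mem_erase.mpr ⟨hyw, hy⟩
      rw [htwin y hy, hiff x hxs y hy']
      constructor
      · rintro (⟨_, h⟩ | ⟨h, _⟩)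
        · exact h
        · exact absurd h hxB
      · exact fun h => Or.inl ⟨hxA, h⟩
  refine ⟨insert w A, B, ⟨w, Finset.mem_insert_self w A⟩, hB,
    Finset.disjoint_insert_left.mpr ⟨hwB, hdisj⟩, ?_, ?_⟩
  · rw [Finset.insert_union, hun, Finset.insert_erase hw]
  · intro a ha b hb
    have hAmem : ∀ c, c ≠ w → (c ∈ insert w A ↔ c ∈ A) := fun c hc => by
      simp [Finset.mem_insert, hc]
    rcases eq_or_ne a w with heq | haw <;> rcases eq_or_ne b w with heq2 | hbw
    · rw [heq, heq2]
      constructor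
      · intro h; exact (G.irrefl h).elim
      · rintro (⟨_, h⟩ | ⟨h, _⟩) <;> exact absurd h hwB
    · rw [heq, key b hb, hAmem b hbw]
      constructor
      · exact fun h => Or.inl ⟨Finset.mem_insert_self w A, h⟩
      · rintro (⟨_, h⟩ | ⟨h, _⟩)
        · exact h
        · exact absurd h hwB
    · rw [heq2, G.adj_comm, key a ha, hAmem a haw]
      constructor
      · exact fun h => Or.inr ⟨h, Finset.mem_insert_self w A⟩
      · rintro (⟨_, h⟩ | ⟨h, _⟩)
        · exact absurd h hwB
        · exact h
    · rw [hAmem a haw, hAmem b hbw]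
      exact hiff a (Finset.mem_erase.mpr ⟨haw, ha⟩) b (Finset.mem_erase.mpr ⟨hbw, hb⟩)

/-- A bi-dismantlable set in which all bi-dominations are mutual is a biclique. -/
lemma BiDismantlable.biclique_of_mutual {s : Finset V} (h : BiDismantlable G s) :
    (∀ v u, BiDominatedIn G s v u → BiDominatedIn G s u v) → IsBiclique G s := by
  induction h with
  | biclique s hb => exact fun _ => hb
  | step s w x hwx hd ih =>
    intro hmax
    have hxw := hmax w x hwx
    have htwin : ∀ y ∈ s, (G.Adj w y ↔ G.Adj x y) :=
      fun y hy => ⟨hwx.2.2.2 y hy, hxw.2.2.2 y hy⟩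
    have hmax' : ∀ a b, BiDominatedIn G (s.erase w) a b → BiDominatedIn G (s.erase w) b a := by
      rintro a b ⟨ha, hb, hab, hpre⟩
      have has := Finset.mem_of_mem_erase ha
      have hbs := Finset.mem_of_mem_erase hb
      have hfull : BiDominatedIn G s a b := by
        refine ⟨has, hbs, hab, ?_⟩
        intro y hy hay
        rcases eq_or_ne y w with heq | hyw
        · rw [heq] at hay ⊢
          have hax : G.Adj a x := ((htwin a has).mp hay.symm).symm
          rcases eq_or_ne x a with rfl | hxa
          · exact (G.irrefl hax).elim
          · have hxe : x ∈ s.erase w := Finset.mem_erase.mpr ⟨hwx.2.2.1.symm, hwx.2.1⟩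
            have hbx : G.Adj b x := hpre x hxe hax
            exact ((htwin b hbs).mpr hbx.symm).symm
        · exact hpre y (Finset.mem_erase.mpr ⟨hyw, hy⟩) hay
      have hrev := hmax a b hfull
      exact ⟨hb, ha, hab.symm, fun y hy => hrev.2.2.2 y (Finset.mem_of_mem_erase hy)⟩
    obtain ⟨A, B, hA, hB, hdisj, hun, hiff⟩ := ih hmax'
    have hx' : x ∈ s.erase w := Finset.mem_erase.mpr ⟨hwx.2.2.1.symm, hwx.2.1⟩
    rcases Finset.mem_union.mp (hun ▸ hx' : x ∈ A ∪ B) with hxA | hxB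
    · exact extend_twin hwx.1 hwx.2.2.1.symm htwin hB hdisj hun hxA hiff
    · exact extend_twin hwx.1 hwx.2.2.1.symm htwin hA hdisj.symm
        (by rwa [Finset.union_comm]) hxB
        (fun a ha b hb => (hiff a ha b hb).trans or_comm)

lemma main_aux : ∀ (n : ℕ) (s : Finset V), s.card ≤ n → s.Nonempty →
    (∀ φ : G ≃g G, s.image φ = s) → BiDismantlable G s →
    ∃ t : Finset V, IsBiclique G t ∧ ∀ φ : G ≃g G, t.image φ = t := by
  intro n
  induction n with
  | zero =>
    intro s hc hne _ _
    exact absurd (Finset.card_pos.mpr hne) (by omega)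
  | succ n ih =>
    intro s hcard hne hinv hbd
    classical
    set M := s.filter (fun v => ∀ u ∈ s,
      (∀ x ∈ s, G.Adj v x → G.Adj u x) → (∀ x ∈ s, G.Adj u x → G.Adj v x)) with hMdef
    have hMsub : M ⊆ s := Finset.filter_subset _ s
    by_cases hMs : M = s
    · refine ⟨s, hbd.biclique_of_mutual ?_, hinv⟩
      rintro v u ⟨hv, hu, hvu, hpre⟩
      have hP := (Finset.mem_filter.mp (hMs ▸ hv : v ∈ M)).2
      exact ⟨hu, hv, hvu.symm, hP u hu hpre⟩
    · have hkey : ∀ v ∈ s, ∃ u ∈ M, ∀ x ∈ s, G.Adj v x → G.Adj u x := by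
        intro v hv
        set T := s.filter (fun u => ∀ x ∈ s, G.Adj v x → G.Adj u x) with hT
        have hvT : v ∈ T := Finset.mem_filter.mpr ⟨hv, fun x _ h => h⟩
        obtain ⟨u, huT, hmaxdeg⟩ :=
          T.exists_max_image (fun u => (s.filter (fun x => G.Adj u x)).card) ⟨v, hvT⟩
        obtain ⟨hus, hpre⟩ := Finset.mem_filter.mp huT
        refine ⟨u, Finset.mem_filter.mpr ⟨hus, ?_⟩, hpre⟩
        intro z hz huz
        have hzT : z ∈ T := Finset.mem_filter.mpr ⟨hz, fun x hx h => huz x hx (hpre x hx h)⟩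
        have hsub : s.filter (fun x => G.Adj u x) ⊆ s.filter (fun x => G.Adj z x) := by
          intro x hx
          have hx' := Finset.mem_filter.mp hx
          exact Finset.mem_filter.mpr ⟨hx'.1, huz x hx'.1 hx'.2⟩
        have heq := Finset.eq_of_subset_of_card_le hsub (hmaxdeg z hzT)
        intro x hx hzx
        have hx' : x ∈ s.filter (fun x => G.Adj z x) := Finset.mem_filter.mpr ⟨hx, hzx⟩
        rw [← heq] at hx'
        exact (Finset.mem_filter.mp hx').2
      have hMne : M.Nonempty := by
        obtain ⟨v, hv⟩ := hne
        obtain ⟨u, huM, _⟩ := hkey v hv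
        exact ⟨u, huM⟩
      have hMbd : BiDismantlable G M := by
        have haux : ∀ (m : ℕ) (t : Finset V), t.card ≤ m → M ⊆ t → t ⊆ s →
            BiDismantlable G t → BiDismantlable G M := by
          intro m
          induction m with
          | zero =>
            intro t hc hMt hts hbdt
            have ht : t = ∅ := Finset.card_eq_zero.mp (Nat.le_zero.mp hc)
            subst ht
            rw [Finset.subset_empty] at hMt
            rw [hMt]
            exact hbdt
          | succ m ihm =>
            intro t hc hMt hts hbdt
            by_cases htM : t = M
            · exact htM ▸ hbdt
            · obtain ⟨v, hvt, hvM⟩ := Finset.exists_of_ssubset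
                (lt_of_le_of_ne hMt (Ne.symm htM))
              obtain ⟨u, huM, hpre⟩ := hkey v (hts hvt)
              have hvu : v ≠ u := fun h => hvM (h ▸ huM)
              have hdom : BiDominatedIn G t v u :=
                ⟨hvt, hMt huM, hvu, fun x hx => hpre x (hts hx)⟩
              refine ihm (t.erase v) ?_ ?_ ((Finset.erase_subset v t).trans hts)
                (hbdt.erase_dom v u hdom)
              · exact Nat.lt_succ_iff.mp (lt_of_lt_of_le (Finset.card_erase_lt_of_mem hvt) hc)
              · intro y hy
                exact Finset.mem_erase.mpr ⟨fun h => hvM (h ▸ hy), hMt hy⟩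
        exact haux s.card s le_rfl hMsub le_rfl hbd
      have hMinv : ∀ φ : G ≃g G, M.image φ = M := by
        have hsub : ∀ φ : G ≃g G, M.image φ ⊆ M := by
          intro φ y hy
          obtain ⟨v, hvM, rfl⟩ := Finset.mem_image.mp hy
          obtain ⟨hvs, hP⟩ := Finset.mem_filter.mp hvM
          refine Finset.mem_filter.mpr ⟨?_, ?_⟩
          · rw [← hinv φ]; exact Finset.mem_image_of_mem _ hvs
          · intro z hz hpre
            rw [← hinv φ] at hz
            obtain ⟨z', hz', rfl⟩ := Finset.mem_image.mp hz
            have hpre' : ∀ x ∈ s, G.Adj v x → G.Adj z' x := by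
              intro x hx hvx
              have hφx : (φ : V → V) x ∈ s := by
                rw [← hinv φ]; exact Finset.mem_image_of_mem _ hx
              exact φ.map_adj_iff.mp (hpre (φ x) hφx (φ.map_adj_iff.mpr hvx))
            have hrev := hP z' hz' hpre'
            intro x hx hzx
            rw [← hinv φ] at hx
            obtain ⟨x', hx', rfl⟩ := Finset.mem_image.mp hx
            exact φ.map_adj_iff.mpr (hrev x' hx' (φ.map_adj_iff.mp hzx))
        intro φ
        apply Finset.eq_of_subset_of_card_le (hsub φ)
        rw [Finset.card_image_of_injective _ φ.injective]
      refine ih M ?_ hMne hMinv hMbd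
      have : M.card < s.card := Finset.card_lt_card (lt_of_le_of_ne hMsub hMs)
      omega

end Aux

/-- A finite bi-dismantlable graph with more than one vertex has a biclique whose
vertex set is stabilized (setwise) by every automorphism. -/
theorem biDismantlable_invariant_biclique {V : Type*} [Fintype V] [DecidableEq V]
    (G : SimpleGraph V)
    (hd : BiDismantlable G Finset.univ)
    (hcard : 1 < Fintype.card V) :
    ∃ s : Finset V, IsBiclique G s ∧ ∀ φ : G ≃g G, s.image φ = s := by
  have hV : Nonempty V := Fintype.card_pos_iff.mp (by omega)
  have hne : (Finset.univ : Finset V).Nonempty := Finset.univ_nonempty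
  have hinv : ∀ φ : G ≃g G, (Finset.univ : Finset V).image φ = Finset.univ := by
    intro φ
    apply Finset.eq_univ_of_forall
    intro x
    exact Finset.mem_image.mpr ⟨φ.symm x, Finset.mem_univ _, φ.apply_symm_apply x⟩
  exact main_aux (G := G) (Finset.univ : Finset V).card Finset.univ le_rfl hne hinv hd
end

section
/- A CAT(0) disc diagram D that is not a single vertex has at least two positively curved vertices on its boundary; if moreover D has no valence-1 vertices then it has at least four boundary vertices with curvature exactly π/2. -/
open Finset

/-- Combinatorial data of a disc diagram with square 2-cells: finite vertex set `V`,
`nedges` edges and `nsquares` square 2-cells; `valence v` is the number of edge-ends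
at `v` and `corners v` the number of corners of squares at `v`.  The Euler
characteristic is 1, edge-ends and corners are counted consistently, and the link of
each vertex is a disjoint union of `ncomp v ≥ 1` arcs if `v` is on the boundary
(`valence v = corners v + ncomp v`; `v` is a cutpoint exactly when `ncomp v ≥ 2`)
and a cycle if `v` is interior (`valence v = corners v`). -/
structure SquareDiscDiagram (V : Type*) [Fintype V] where
  valence : V → ℕ
  corners : V → ℕ
  onBoundary : V → Prop
  ncomp : V → ℕ
  nedges : ℕ
  nsquares : ℕ
  euler : (Fintype.card V : ℤ) - nedges + nsquares = 1
  handshake : ∑ v, valence v = 2 * nedges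
  corner_count : ∑ v, corners v = 4 * nsquares
  boundary_link : ∀ v, onBoundary v → 1 ≤ ncomp v ∧ valence v = corners v + ncomp v
  interior_link : ∀ v, ¬ onBoundary v → valence v = corners v

/-- Curvature κ(v) = 2π − δ(v)π + (ρ(v)/2)π of a vertex of a square disc diagram. -/
noncomputable def SquareDiscDiagram.curv {V : Type*} [Fintype V] (D : SquareDiscDiagram V) (v : V) : ℝ :=
  2 * Real.pi - (D.valence v : ℝ) * Real.pi + ((D.corners v : ℝ) / 2) * Real.pi
section Aux

variable {V : Type*} [Fintype V] (D : SquareDiscDiagram V)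

lemma gauss_bonnet : ∑ v, D.curv v = 2 * Real.pi := by
  have hval : (∑ v, (D.valence v : ℝ)) = 2 * D.nedges := by
    exact_mod_cast congrArg (fun n : ℕ => (n : ℝ)) D.handshake
  have hcor : (∑ v, (D.corners v : ℝ)) = 4 * D.nsquares := by
    exact_mod_cast congrArg (fun n : ℕ => (n : ℝ)) D.corner_count
  have heuler : (Fintype.card V : ℝ) - D.nedges + D.nsquares = 1 := by
    exact_mod_cast congrArg (fun n : ℤ => (n : ℝ)) D.euler
  have : ∑ v, D.curv v =
      (Fintype.card V : ℝ) * (2 * Real.pi) - (∑ v, (D.valence v : ℝ)) * Real.pi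
        + ((∑ v, (D.corners v : ℝ)) / 2) * Real.pi := by
    simp only [SquareDiscDiagram.curv, Finset.sum_add_distrib, Finset.sum_sub_distrib,
      Finset.sum_const, Finset.card_univ, nsmul_eq_mul, ← Finset.sum_mul, Finset.sum_div]
  rw [this, hval, hcor]
  nlinarith [Real.pi_pos, heuler]

lemma aux_pos (hcat0 : ∀ v, ¬ D.onBoundary v → 4 ≤ D.corners v) (v : V)
    (hv : 0 < D.curv v) :
    D.onBoundary v ∧ D.curv v ≤ Real.pi ∧ (D.valence v ≠ 1 → D.curv v = Real.pi / 2) := by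
  have hπ := Real.pi_pos
  by_cases hb : D.onBoundary v
  · obtain ⟨hn, hval⟩ := D.boundary_link v hb
    have hvr : (D.valence v : ℝ) = (D.corners v : ℝ) + (D.ncomp v : ℝ) := by
      exact_mod_cast congrArg (fun n : ℕ => (n : ℝ)) hval
    have hnr : (1 : ℝ) ≤ (D.ncomp v : ℝ) := by exact_mod_cast hn
    have hcr : (0 : ℝ) ≤ (D.corners v : ℝ) := by positivity
    have hle : D.curv v ≤ Real.pi := by
      simp only [SquareDiscDiagram.curv]
      nlinarith
    refine ⟨hb, hle, fun hval1 => ?_⟩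
    -- positivity forces 2 * ncomp + corners < 4
    have h4 : 2 * D.ncomp v + D.corners v < 4 := by
      by_contra hge
      push_neg at hge
      have hger : (4 : ℝ) ≤ 2 * (D.ncomp v : ℝ) + (D.corners v : ℝ) := by
        exact_mod_cast hge
      have : D.curv v ≤ 0 := by
        simp only [SquareDiscDiagram.curv]
        nlinarith
      linarith
    have hn1 : D.ncomp v = 1 := by omega
    have hc01 : D.corners v = 0 ∨ D.corners v = 1 := by omega
    rcases hc01 with hc | hc
    · exfalso
      apply hval1
      omega
    · simp only [SquareDiscDiagram.curv, hval, hn1, hc]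
      push_cast
      ring
  · exfalso
    have hc : (4 : ℝ) ≤ (D.corners v : ℝ) := by exact_mod_cast hcat0 v hb
    have hvr : (D.valence v : ℝ) = (D.corners v : ℝ) := by
      exact_mod_cast congrArg (fun n : ℕ => (n : ℝ)) (D.interior_link v hb)
    have : D.curv v ≤ 0 := by
      simp only [SquareDiscDiagram.curv]
      nlinarith
    linarith

end Aux

/-- Greendlinger's lemma for CAT(0) disc diagrams: if every interior vertex is
incident to at least four squares and the diagram is not a single vertex, then at
least two boundary vertices are positively curved; if moreover there is no
valence-1 vertex, at least four boundary vertices have curvature exactly π/2. -/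
theorem greendlinger_cat0 {V : Type*} [Fintype V] (D : SquareDiscDiagram V)
    (hnv : ¬ (Fintype.card V = 1 ∧ D.nedges = 0))
    (hcat0 : ∀ v, ¬ D.onBoundary v → 4 ≤ D.corners v) :
    2 ≤ {v : V | D.onBoundary v ∧ 0 < D.curv v}.ncard ∧
    ((∀ v : V, D.valence v ≠ 1) →
      4 ≤ {v : V | D.onBoundary v ∧ D.curv v = Real.pi / 2}.ncard) := by
  classical
  have hπ := Real.pi_pos
  set S : Finset V := Finset.univ.filter (fun v => 0 < D.curv v) with hS
  have hmemS : ∀ v, v ∈ S ↔ 0 < D.curv v := by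
    intro v; simp [hS]
  have hsum : 2 * Real.pi ≤ ∑ v ∈ S, D.curv v := by
    have hsplit := Finset.sum_filter_add_sum_filter_not Finset.univ
      (fun v => 0 < D.curv v) D.curv
    have hneg : ∑ v ∈ Finset.univ.filter (fun v => ¬ 0 < D.curv v), D.curv v ≤ 0 := by
      apply Finset.sum_nonpos
      intro v hv
      simp only [Finset.mem_filter] at hv
      linarith [hv.2]
    have := gauss_bonnet D
    rw [← hsplit] at this
    rw [hS]
    linarith
  constructor
  · -- part 1
    have hcard : 2 * Real.pi ≤ (S.card : ℝ) * Real.pi := by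
      calc 2 * Real.pi ≤ ∑ v ∈ S, D.curv v := hsum
        _ ≤ S.card • Real.pi := Finset.sum_le_card_nsmul S _ _ (fun v hv =>
            (aux_pos D hcat0 v ((hmemS v).mp hv)).2.1)
        _ = (S.card : ℝ) * Real.pi := by simp [nsmul_eq_mul]
    have h2 : (2 : ℝ) ≤ (S.card : ℝ) := by
      have := (mul_le_mul_iff_of_pos_right hπ).mp hcard
      linarith
    have h2' : 2 ≤ S.card := by exact_mod_cast h2
    have hset : {v : V | D.onBoundary v ∧ 0 < D.curv v} = ↑S := by
      ext v
      simp only [Set.mem_setOf_eq, Finset.coe_filter, hS, Finset.mem_univ, true_and,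
        Set.mem_setOf_eq]
      constructor
      · exact fun h => h.2
      · exact fun h => ⟨(aux_pos D hcat0 v h).1, h⟩
    rw [hset, Set.ncard_coe_finset]
    exact h2'
  · intro hval1
    have hhalf : ∀ v ∈ S, D.curv v = Real.pi / 2 := fun v hv =>
      (aux_pos D hcat0 v ((hmemS v).mp hv)).2.2 (hval1 v)
    have hsum2 : ∑ v ∈ S, D.curv v = (S.card : ℝ) * (Real.pi / 2) := by
      rw [Finset.sum_congr rfl hhalf, Finset.sum_const, nsmul_eq_mul]
    have hcard : 2 * Real.pi ≤ (S.card : ℝ) * (Real.pi / 2) := by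
      rw [← hsum2]; exact hsum
    have h4 : (4 : ℝ) ≤ (S.card : ℝ) := by nlinarith
    have h4' : 4 ≤ S.card := by exact_mod_cast h4
    have hsub : (↑S : Set V) ⊆ {v : V | D.onBoundary v ∧ D.curv v = Real.pi / 2} := by
      intro v hv
      simp only [Finset.coe_filter, hS, Finset.mem_univ, true_and, Set.mem_setOf_eq] at hv
      exact ⟨(aux_pos D hcat0 v hv).1, hhalf v ((hmemS v).mpr hv)⟩
    calc 4 ≤ S.card := h4'
      _ = (↑S : Set V).ncard := (Set.ncard_coe_finset S).symm
      _ ≤ _ := Set.ncard_le_ncard hsub (Set.toFinite _)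
end

section
/- Let D be a C(4)-T(4) disc diagram that is not a single 0-cell or a single 2-cell, having no spurs, and in which every boundary 2-cell has at least three nodes on its boundary. Then D has at least four boundary 2-cells with exactly three nodes on their boundary. -/
open Finset

/-- Combinatorial data of a disc diagram decomposed into nodes, arcs and 2-cells:
`N` is the finite set of nodes (0-cells of valence ≠ 2), `narcs` the number of arcs,
`F` the finite set of 2-cells; `valence v` is the number of arc-ends at the node `v`,
`rho v` the number of 2-cells incident to `v`, and `nu c` the number of nodes on the
boundary of the 2-cell `c`.  The Euler characteristic is 1 and incidences are counted
consistently. -/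
structure NodeArcDiscDiagram (N F : Type*) [Fintype N] [Fintype F] where
  valence : N → ℕ
  rho : N → ℕ
  nu : F → ℕ
  narcs : ℕ
  euler : (Fintype.card N : ℤ) - narcs + Fintype.card F = 1
  handshake : ∑ v, valence v = 2 * narcs
  incidence : ∑ v, rho v = ∑ c, nu c

/-- Curvature κ(v) = 2π − δ(v)π + (ρ(v)/2)π of a node. -/
noncomputable def NodeArcDiscDiagram.nodeCurv {N F : Type*} [Fintype N] [Fintype F]
    (D : NodeArcDiscDiagram N F) (v : N) : ℝ :=
  2 * Real.pi - (D.valence v : ℝ) * Real.pi + ((D.rho v : ℝ) / 2) * Real.pi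

/-- Curvature κ(F) = 2π − (ν(F)/2)π of a 2-cell. -/
noncomputable def NodeArcDiscDiagram.cellCurv {N F : Type*} [Fintype N] [Fintype F]
    (D : NodeArcDiscDiagram N F) (c : F) : ℝ :=
  2 * Real.pi - ((D.nu c : ℝ) / 2) * Real.pi

/-- A disc diagram with its boundary data: which nodes lie on the boundary and which
2-cells are boundary 2-cells (have a boundary arc).  Interior nodes have as many
incident 2-cells as arcs; boundary nodes have strictly fewer; nodes never have
valence 2. -/
structure BoundedDiscDiagram (N F : Type*) [Fintype N] [Fintype F]
    extends NodeArcDiscDiagram N F where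
  boundaryNode : N → Prop
  boundaryCell : F → Prop
  node_valence_ne_two : ∀ v : N, valence v ≠ 2
  interior_rho : ∀ v : N, ¬ boundaryNode v → rho v = valence v
  boundary_rho : ∀ v : N, boundaryNode v → rho v < valence v

/-- Greendlinger's lemma for C(4)-T(4) disc diagrams: a C(4)-T(4) disc diagram which
is not a single 0-cell or 2-cell, has no spurs, and all of whose boundary 2-cells
have at least three nodes, has at least four boundary 2-cells with exactly three
nodes on their boundary. -/
theorem greendlinger_cftf {N F : Type*} [Fintype N] [Fintype F]
    (D : BoundedDiscDiagram N F)
    (hC4 : ∀ c : F, ¬ D.boundaryCell c → 4 ≤ D.nu c)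
    (hT4 : ∀ v : N, ¬ D.boundaryNode v → 4 ≤ D.valence v)
    (hnospur : ∀ v : N, D.valence v ≠ 1)
    (hnot0cell : ∀ v : N, D.valence v ≠ 0)
    (hnot2cell : ∀ c : F, 1 ≤ D.nu c)
    (hb3 : ∀ c : F, D.boundaryCell c → 3 ≤ D.nu c) :
    4 ≤ {c : F | D.boundaryCell c ∧ D.nu c = 3}.ncard := by
  classical
  have pi_pos := Real.pi_pos
  set S : Finset F := Finset.univ.filter (fun c => D.boundaryCell c ∧ D.nu c = 3) with hS
  have hset : {c : F | D.boundaryCell c ∧ D.nu c = 3} = (S : Set F) := by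
    ext c; simp [hS]
  rw [hset, Set.ncard_coe_finset]
  -- Gauss–Bonnet
  have hsumδ : (∑ v, (D.valence v : ℝ)) = 2 * D.narcs := by
    have h := congrArg (fun n : ℕ => (n : ℝ)) D.handshake
    push_cast at h; exact h
  have hsumρν : (∑ v, (D.rho v : ℝ)) = ∑ c, (D.nu c : ℝ) := by
    have := D.incidence
    exact_mod_cast congrArg (fun n : ℕ => (n : ℝ)) this
  have heuler : (Fintype.card N : ℝ) - D.narcs + Fintype.card F = 1 := by
    exact_mod_cast D.euler
  have hGB : (∑ v, D.toNodeArcDiscDiagram.nodeCurv v)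
      + (∑ c, D.toNodeArcDiscDiagram.cellCurv c) = 2 * Real.pi := by
    simp only [NodeArcDiscDiagram.nodeCurv, NodeArcDiscDiagram.cellCurv,
      Finset.sum_add_distrib, Finset.sum_sub_distrib, Finset.sum_const,
      Finset.card_univ, nsmul_eq_mul, ← Finset.sum_mul, ← Finset.sum_div]
    rw [hsumρν] at *
    nlinarith [hsumδ, heuler]
  -- node curvature nonpositive
  have hnode : ∀ v, D.toNodeArcDiscDiagram.nodeCurv v ≤ 0 := by
    intro v
    unfold NodeArcDiscDiagram.nodeCurv
    by_cases hv : D.boundaryNode v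
    · have h1 : D.rho v + 1 ≤ D.valence v := D.boundary_rho v hv
      have h2 : 3 ≤ D.valence v := by
        have := hnospur v; have := hnot0cell v; have := D.node_valence_ne_two v
        omega
      have h1' : (D.rho v : ℝ) + 1 ≤ D.valence v := by exact_mod_cast h1
      have h2' : (3 : ℝ) ≤ D.valence v := by exact_mod_cast h2
      nlinarith
    · have h1 : D.rho v = D.valence v := D.interior_rho v hv
      have h2 : 4 ≤ D.valence v := hT4 v hv
      have h2' : (4 : ℝ) ≤ D.valence v := by exact_mod_cast h2
      rw [h1]; nlinarith
  -- cell curvature bound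
  have hcell : ∀ c, D.toNodeArcDiscDiagram.cellCurv c
      ≤ if c ∈ S then Real.pi / 2 else 0 := by
    intro c
    unfold NodeArcDiscDiagram.cellCurv
    by_cases hc : c ∈ S
    · simp only [hS, Finset.mem_filter] at hc
      rw [if_pos (by simp [hS, hc.2.1, hc.2.2])]
      rw [hc.2.2]; push_cast; nlinarith
    · rw [if_neg hc]
      have h4 : 4 ≤ D.nu c := by
        simp only [hS, Finset.mem_filter, Finset.mem_univ, true_and, not_and] at hc
        by_cases hb : D.boundaryCell c
        · have := hb3 c hb; have := hc hb; omega
        · exact hC4 c hb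
      have h4' : (4 : ℝ) ≤ D.nu c := by exact_mod_cast h4
      nlinarith
  have hsumcell : (∑ c, D.toNodeArcDiscDiagram.cellCurv c) ≤ S.card * (Real.pi / 2) := by
    calc (∑ c, D.toNodeArcDiscDiagram.cellCurv c)
        ≤ ∑ c, (if c ∈ S then Real.pi / 2 else 0) :=
          Finset.sum_le_sum (fun c _ => hcell c)
      _ = S.card * (Real.pi / 2) := by
          rw [Finset.sum_ite_mem, Finset.univ_inter, Finset.sum_const, nsmul_eq_mul]
  have hsumnode : (∑ v, D.toNodeArcDiscDiagram.nodeCurv v) ≤ 0 :=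
    Finset.sum_nonpos (fun v _ => hnode v)
  have hfinal : 2 * Real.pi ≤ S.card * (Real.pi / 2) := by linarith
  have : (4 : ℝ) ≤ S.card := by nlinarith
  exact_mod_cast this
end
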